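/- Let K be a field containing F_q and A ∈ GL_n(K). Every solution X ∈ \bar{K}^n of the system A X^{(q)} = X has all its coordinates in the separable closure K_sep of K. -/

import Mathlib

/-- Let `K ⊇ F_q` and `A ∈ GL_n(K)`. Every solution `X ∈ K̄^n` of `A X^{(q)} = X` has
all its coordinates separable over `K`. -/
theorem stmt_7 (F : Type*) [Field F] [Fintype F] (q : ℕ) (hq : q = Fintype.card F)
    (K : Type*) [Field K] [Algebra F K]
    (n : ℕ) (A : Matrix (Fin n) (Fin n) K) (hA : IsUnit A)
    (X : Fin n → AlgebraicClosure K)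
    (hX : (A.map (algebraMap K (AlgebraicClosure K))).mulVec (fun i => X i ^ q) = X) :
    ∀ i, IsSeparable K (X i) := by
  let Ω := AlgebraicClosure K
  set p := ringChar F with hpdef
  haveI : CharP F p := ringChar.charP F
  obtain ⟨r, hp, hcard⟩ := FiniteField.card F p
  have hqp : q = p ^ (r : ℕ) := hq.trans hcard
  haveI hpK : CharP K p := charP_of_injective_algebraMap (algebraMap F K).injective p
  haveI : CharP Ω p := charP_of_injective_algebraMap (algebraMap K Ω).injective p
  haveI hexp : ExpChar Ω p := .prime hp
  set E := separableClosure K Ω with hE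
  haveI : CharP E p := charP_of_injective_algebraMap (algebraMap K E).injective p
  haveI : ExpChar E p := .prime hp
  -- equation per coordinate
  have heq : ∀ j, X j = ∑ k, algebraMap K Ω (A j k) * X k ^ q := by
    intro j
    conv_lhs => rw [← hX]
    simp [Matrix.mulVec, Matrix.map_apply, dotProduct]; rfl
  -- inductive step down
  have step : ∀ m : ℕ, (∀ j, X j ^ q ^ (m + 1) ∈ E) → ∀ j, X j ^ q ^ m ∈ E := by
    intro m h j
    have key : X j ^ q ^ m = ∑ k, algebraMap K Ω (A j k ^ q ^ m) * X k ^ q ^ (m + 1) := by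
      conv_lhs => rw [heq j]
      have hqm : q ^ m = p ^ ((r : ℕ) * m) := by rw [hqp, ← pow_mul]
      rw [hqm, sum_pow_char_pow]
      refine Finset.sum_congr rfl fun k _ => ?_
      rw [mul_pow, ← map_pow, ← pow_mul, ← hqm, ← pow_succ']
    rw [key]
    exact Subalgebra.sum_mem _ fun k _ =>
      mul_mem (E.algebraMap_mem _) (h k)
  have descend : ∀ m : ℕ, (∀ j, X j ^ q ^ m ∈ E) → ∀ j, X j ∈ E := by
    intro m
    induction m with
    | zero => intro h j; simpa using h j
    | succ m ih => intro h; exact ih (step m h)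
  -- find a uniform power landing in E
  have hex : ∀ j, ∃ m : ℕ, X j ^ q ^ m ∈ E := by
    intro j
    obtain ⟨k, y, hy⟩ := IsPurelyInseparable.pow_mem E p (X j)
    refine ⟨k, ?_⟩
    have hk : X j ^ p ^ k ∈ E := by rw [← hy]; exact y.2
    have : q ^ k = p ^ k * p ^ ((r : ℕ) * k - k) := by
      rw [← pow_add, hqp, ← pow_mul]
      congr 1
      have : k ≤ (r : ℕ) * k := Nat.le_mul_of_pos_left k r.pos
      omega
    rw [this, pow_mul]
    exact pow_mem hk _
  choose m hm using hex
  set M := Finset.univ.sup m with hM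
  have hMe : ∀ j, X j ^ q ^ M ∈ E := by
    intro j
    have hle : m j ≤ M := Finset.le_sup (Finset.mem_univ j)
    have : q ^ M = q ^ m j * q ^ (M - m j) := by
      rw [← pow_add]; congr 1; omega
    rw [this, pow_mul]
    exact pow_mem (hm j) _
  intro i
  have hi := descend M hMe i
  rw [hE] at hi
  exact mem_separableClosure_iff.mp hi
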